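/- Let u ⊆ {1,…,s} be nonempty and suppose C_{u,1_u} (the |u|×m matrix whose rows are the first rows of C_j for j ∈ u) has full row rank over F₂. Then for every k ∈ {0,1,…,m−1}^{|u|}, Γ_{u,k} ≤ 2^{t*_u + |u| − 1}. -/

import Mathlib

open Finset

noncomputable section

/-- The bit vector `i⃗ ∈ F₂^m` of the integer `i = Σ_{ℓ=1}^m i_ℓ 2^{ℓ-1}`. -/
def bvec (m : ℕ) (i : ℕ) : Fin m → ZMod 2 :=
  fun ℓ => if Nat.testBit i ℓ.1 then 1 else 0

/-- The `(r+1)`-st row (i.e. `r` with 0-indexing) of an `m × m` matrix over `F₂`,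
as a vector in `F₂^m`; junk value `0` if `r ≥ m` (never used under the hypotheses below). -/
def rowAt (m : ℕ) (A : Matrix (Fin m) (Fin m) (ZMod 2)) (r : ℕ) : Fin m → ZMod 2 :=
  fun ℓ => if h : r < m then A ⟨r, h⟩ ℓ else 0

/-- The stacked matrix `C_{u,k}`: for each `j ∈ u`, the first `k j` rows of `C j`. -/
def stack {m s : ℕ} (C : Fin s → Matrix (Fin m) (Fin m) (ZMod 2))
    (u : Finset (Fin s)) (k : Fin s → ℕ) :
    Matrix ((j : {x // x ∈ u}) × Fin (k j.1)) (Fin m) (ZMod 2) :=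
  fun p => rowAt m (C p.1.1) p.2.1

/-- `∇C_{u,k}`: the matrix whose rows are the `(k j + 1)`-st rows (1-indexed) of `C j`, `j ∈ u`. -/
def grad {m s : ℕ} (C : Fin s → Matrix (Fin m) (Fin m) (ZMod 2))
    (u : Finset (Fin s)) (k : Fin s → ℕ) :
    Matrix {x // x ∈ u} (Fin m) (ZMod 2) :=
  fun j => rowAt m (C j.1) (k j.1)

/-- The coordinate `x_{ij} ∈ [0,1)` of the digital net generated by `C₁,…,C_s`:
`x_{ij} = Σ_{ℓ=1}^m y_ℓ 2^{-ℓ}` where `y = C_j · i⃗` over `F₂`. -/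
def pt {m s : ℕ} (C : Fin s → Matrix (Fin m) (Fin m) (ZMod 2)) (i : ℕ) (j : Fin s) : ℝ :=
  ∑ ℓ : Fin m, (((C j).mulVec (bvec m i) ℓ).val : ℝ) / 2 ^ (ℓ.1 + 1)

/-- The factor `N`: with `M(x,x') = max{k ∈ ℕ₀ : ⌊2^k x⌋ = ⌊2^k x'⌋}` (the number of matching
leading binary digits), `Nf x x' c` equals `1` if `M(x,x') > c` (equivalently the first `c+1`
binary digits match), `-1` if `M(x,x') = c` (the first `c` digits match but not `c+1`), and
`0` if `M(x,x') < c`. -/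
def Nf (x x' : ℝ) (c : ℕ) : ℤ :=
  if ⌊(2:ℝ) ^ (c + 1) * x⌋ = ⌊(2:ℝ) ^ (c + 1) * x'⌋ then 1
  else if ⌊(2:ℝ) ^ c * x⌋ = ⌊(2:ℝ) ^ c * x'⌋ then -1
  else 0

/-- The gain coefficient `Γ_{u,k} = 2^{-m} Σ_{i=0}^{2^m-1} Σ_{i'=0}^{2^m-1} ∏_{j∈u} N_{i,i',j}`. -/
def Gam {m s : ℕ} (C : Fin s → Matrix (Fin m) (Fin m) (ZMod 2))
    (u : Finset (Fin s)) (k : Fin s → ℕ) : ℚ :=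
  (2 ^ m : ℚ)⁻¹ * ∑ i ∈ Finset.range (2 ^ m), ∑ i' ∈ Finset.range (2 ^ m),
      ∏ j ∈ u, (Nf (pt C i j) (pt C i' j) (k j) : ℚ)

/-- `t*_u = m + 1 - min{|k| : 1 ≤ k_j ≤ m for all j ∈ u, C_{u,k} not of full row rank}`,
with the convention that the minimum over the empty set is `m+1`. -/
def tStar {m s : ℕ} (C : Fin s → Matrix (Fin m) (Fin m) (ZMod 2))
    (u : Finset (Fin s)) : ℕ :=
  m + 1 - sInf ({K : ℕ | ∃ k : Fin s → ℕ, (∀ j ∈ u, 1 ≤ k j ∧ k j ≤ m) ∧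
      K = ∑ j ∈ u, k j ∧ (stack C u k).rank ≠ ∑ j ∈ u, k j} ∪ {m + 1})

/-! ### Auxiliary material -/

namespace DigAux

/-! #### Bits, prefixes, and floors -/

lemma char2 (x y : ZMod 2) : x = y ↔ x + y = 0 := by revert x y; decide

/-- bits as naturals, padded by 0 -/
def bitv (m : ℕ) (y : Fin m → ZMod 2) (ℓ : ℕ) : ℕ :=
  if h : ℓ < m then (y ⟨ℓ, h⟩).val else 0

def pre (m : ℕ) (y : Fin m → ZMod 2) (c : ℕ) : ℕ :=
  ∑ ℓ ∈ Finset.range c, bitv m y ℓ * 2 ^ (c - 1 - ℓ)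

lemma bitv_le_one (m : ℕ) (y : Fin m → ZMod 2) (ℓ : ℕ) : bitv m y ℓ ≤ 1 := by
  unfold bitv
  split
  · exact Nat.lt_succ_iff.mp (ZMod.val_lt _)
  · exact Nat.zero_le _

lemma pre_succ (m : ℕ) (y : Fin m → ZMod 2) (c : ℕ) :
    pre m y (c + 1) = 2 * pre m y c + bitv m y c := by
  unfold pre
  rw [Finset.sum_range_succ, Finset.mul_sum]
  have h1 : ∀ ℓ ∈ Finset.range c,
      bitv m y ℓ * 2 ^ (c + 1 - 1 - ℓ) = 2 * (bitv m y ℓ * 2 ^ (c - 1 - ℓ)) := by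
    intro ℓ hℓ
    rw [Finset.mem_range] at hℓ
    have h2 : c + 1 - 1 - ℓ = (c - 1 - ℓ) + 1 := by omega
    rw [h2, pow_succ]; ring
  rw [Finset.sum_congr rfl h1]
  simp

lemma pre_inj (m : ℕ) (y y' : Fin m → ZMod 2) (c : ℕ)
    (h : pre m y c = pre m y' c) : ∀ ℓ < c, bitv m y ℓ = bitv m y' ℓ := by
  induction c with
  | zero => omega
  | succ c ih =>
    rw [pre_succ, pre_succ] at h
    have h1 := bitv_le_one m y c
    have h2 := bitv_le_one m y' c
    have hbc : bitv m y c = bitv m y' c := by omega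
    have hpre : pre m y c = pre m y' c := by omega
    intro ℓ hℓ
    rcases Nat.lt_succ_iff_lt_or_eq.mp hℓ with h' | h'
    · exact ih hpre ℓ h'
    · subst h'; exact hbc

/-- the real value of a bit vector -/
def rval (m : ℕ) (y : Fin m → ZMod 2) : ℝ :=
  ∑ ℓ : Fin m, ((y ℓ).val : ℝ) / 2 ^ (ℓ.1 + 1)

lemma geom_lt_one (n : ℕ) : ∑ j ∈ Finset.range n, (1:ℝ) / 2 ^ (j + 1) < 1 := by
  have h : ∀ n : ℕ, ∑ j ∈ Finset.range n, (1:ℝ) / 2 ^ (j + 1) = 1 - 1 / 2 ^ n := by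
    intro n
    induction n with
    | zero => simp
    | succ n ih =>
      rw [Finset.sum_range_succ, ih]
      have : (2:ℝ) ^ (n+1) = 2 ^ n * 2 := by ring
      field_simp
      ring
  rw [h]
  have : (0:ℝ) < 1 / 2 ^ n := by positivity
  linarith

lemma floor_rval (m : ℕ) (y : Fin m → ZMod 2) (c : ℕ) (hc : c ≤ m) :
    ⌊(2:ℝ) ^ c * rval m y⌋ = (pre m y c : ℤ) := by
  have hval : rval m y = ∑ ℓ ∈ Finset.range m, (bitv m y ℓ : ℝ) / 2 ^ (ℓ + 1) := by
    rw [rval, Finset.sum_range fun ℓ => (bitv m y ℓ : ℝ) / 2 ^ (ℓ + 1)]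
    apply Finset.sum_congr rfl
    intro ℓ _
    simp [bitv, ℓ.2]
  have hsplit : (2:ℝ) ^ c * rval m y =
      (pre m y c : ℝ) + ∑ ℓ ∈ Finset.Ico c m, (bitv m y ℓ : ℝ) / 2 ^ (ℓ + 1 - c) := by
    rw [hval, Finset.mul_sum]
    rw [Finset.range_eq_Ico, ← Finset.sum_Ico_consecutive _ (Nat.zero_le c) hc,
        ← Finset.range_eq_Ico]
    congr 1
    · rw [pre, Nat.cast_sum]
      apply Finset.sum_congr rfl
      intro ℓ hℓ
      rw [Finset.mem_range] at hℓ
      have h2 : (2:ℝ) ^ c = 2 ^ (ℓ + 1) * 2 ^ (c - 1 - ℓ) := by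
        rw [← pow_add]; congr 1; omega
      have h3 : (2:ℝ) ^ (ℓ+1) ≠ 0 := by positivity
      push_cast
      rw [h2]
      field_simp
    · apply Finset.sum_congr rfl
      intro ℓ hℓ
      rw [Finset.mem_Ico] at hℓ
      have h2 : (2:ℝ) ^ (ℓ + 1) = 2 ^ c * 2 ^ (ℓ + 1 - c) := by
        rw [← pow_add]; congr 1; omega
      have h3 : (2:ℝ) ^ c ≠ 0 := by positivity
      rw [h2]
      field_simp
  rw [hsplit]
  have hr0 : 0 ≤ ∑ ℓ ∈ Finset.Ico c m, (bitv m y ℓ : ℝ) / 2 ^ (ℓ + 1 - c) := by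
    apply Finset.sum_nonneg; intro ℓ _; positivity
  have hr1 : ∑ ℓ ∈ Finset.Ico c m, (bitv m y ℓ : ℝ) / 2 ^ (ℓ + 1 - c) < 1 := by
    calc ∑ ℓ ∈ Finset.Ico c m, (bitv m y ℓ : ℝ) / 2 ^ (ℓ + 1 - c)
        ≤ ∑ ℓ ∈ Finset.Ico c m, (1:ℝ) / 2 ^ (ℓ + 1 - c) := by
          apply Finset.sum_le_sum
          intro ℓ _
          have := bitv_le_one m y ℓ
          have h1 : (bitv m y ℓ : ℝ) ≤ 1 := by exact_mod_cast this
          have h2 : (0:ℝ) < 2 ^ (ℓ + 1 - c) := by positivity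
          exact div_le_div_of_nonneg_right h1 h2.le
      _ = ∑ j ∈ Finset.range (m - c), (1:ℝ) / 2 ^ (j + 1) := by
          rw [Finset.sum_Ico_eq_sum_range]
          apply Finset.sum_congr rfl
          intro j _
          congr 2
          omega
      _ < 1 := geom_lt_one _
  rw [Int.floor_eq_iff]
  push_cast
  constructor <;> linarith

/-! #### bitsEq and the Nf bridge -/

def bitsEq {m : ℕ} (y y' : Fin m → ZMod 2) (c : ℕ) : Prop :=
  ∀ ℓ : Fin m, ℓ.1 < c → y ℓ = y' ℓ

instance bitsEq.dec {m : ℕ} (y y' : Fin m → ZMod 2) (c : ℕ) : Decidable (bitsEq y y' c) :=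
  inferInstanceAs (Decidable (∀ ℓ : Fin m, ℓ.1 < c → y ℓ = y' ℓ))

lemma floor_eq_iff_bits {m : ℕ} (y y' : Fin m → ZMod 2) (c : ℕ) (hc : c ≤ m) :
    (⌊(2:ℝ) ^ c * rval m y⌋ = ⌊(2:ℝ) ^ c * rval m y'⌋) ↔ bitsEq y y' c := by
  rw [floor_rval m y c hc, floor_rval m y' c hc]
  rw [Int.natCast_inj]
  constructor
  · intro h ℓ hℓ
    have h2 := pre_inj m y y' c h ℓ.1 hℓ
    have h3 : ℓ.1 < m := ℓ.2
    simp only [bitv, dif_pos h3] at h2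
    exact ZMod.val_injective 2 (by simpa using h2)
  · intro h
    unfold pre
    apply Finset.sum_congr rfl
    intro ℓ hℓ
    rw [Finset.mem_range] at hℓ
    have h3 : ℓ < m := lt_of_lt_of_le hℓ hc
    have h4 := h ⟨ℓ, h3⟩ hℓ
    simp [bitv, h3, h4]

lemma bitsEq_mono {m : ℕ} (y y' : Fin m → ZMod 2) (c : ℕ) (h : bitsEq y y' (c + 1)) :
    bitsEq y y' c := fun ℓ hℓ => h ℓ (by omega)

lemma Nf_eq {m : ℕ} (y y' : Fin m → ZMod 2) (c : ℕ) (hc : c + 1 ≤ m) :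
    (Nf (rval m y) (rval m y') c : ℚ)
      = 2 * (if bitsEq y y' (c + 1) then (1 : ℚ) else 0)
        - (if bitsEq y y' c then (1 : ℚ) else 0) := by
  classical
  have h1 := floor_eq_iff_bits y y' (c + 1) hc
  have h0 := floor_eq_iff_bits y y' c (by omega)
  by_cases hb1 : bitsEq y y' (c + 1) <;> by_cases hb0 : bitsEq y y' c
  · simp [Nf, h1, h0, hb1, hb0]; norm_num
  · exact absurd (bitsEq_mono y y' c hb1) hb0
  · simp [Nf, h1, h0, hb1, hb0]
  · simp [Nf, h1, h0, hb1, hb0]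

lemma Nf_abs {m : ℕ} (y y' : Fin m → ZMod 2) (c : ℕ) (hc : c + 1 ≤ m) :
    |(Nf (rval m y) (rval m y') c : ℚ)| ≤ (if bitsEq y y' c then (1 : ℚ) else 0) := by
  rw [Nf_eq y y' c hc]
  by_cases hb1 : bitsEq y y' (c + 1) <;> by_cases hb0 : bitsEq y y' c
  · simp [hb1, hb0]; norm_num
  · exact absurd (bitsEq_mono y y' c hb1) hb0
  · simp [hb1, hb0]
  · simp [hb1, hb0]

/-! #### stack / kernel correspondence -/

lemma bitsEq_mulVec_iff {m : ℕ} (A : Matrix (Fin m) (Fin m) (ZMod 2))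
    (a b : Fin m → ZMod 2) (c : ℕ) :
    bitsEq (A.mulVec a) (A.mulVec b) c ↔ ∀ ℓ : Fin m, ℓ.1 < c → A.mulVec (a + b) ℓ = 0 := by
  unfold bitsEq
  rw [Matrix.mulVec_add]
  constructor
  · intro h ℓ hℓ
    rw [Pi.add_apply, ← char2]
    exact h ℓ hℓ
  · intro h ℓ hℓ
    rw [char2]
    exact h ℓ hℓ

lemma rowAt_dot {m : ℕ} (A : Matrix (Fin m) (Fin m) (ZMod 2)) (r : ℕ) (h : r < m)
    (w : Fin m → ZMod 2) : dotProduct (rowAt m A r) w = A.mulVec w ⟨r, h⟩ := by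
  have h1 : rowAt m A r = fun ℓ => A ⟨r, h⟩ ℓ := by funext ℓ; simp [rowAt, h]
  rw [h1]
  rfl

lemma stack_mulVec_eq_zero_iff {m s : ℕ} (C : Fin s → Matrix (Fin m) (Fin m) (ZMod 2))
    (u : Finset (Fin s)) (c : Fin s → ℕ) (hc : ∀ j ∈ u, c j ≤ m) (w : Fin m → ZMod 2) :
    (stack C u c).mulVec w = 0 ↔
      ∀ j : Fin s, ∀ hj : j ∈ u, ∀ ℓ : Fin m, ℓ.1 < c j → (C j).mulVec w ℓ = 0 := by
  rw [funext_iff]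
  constructor
  · intro H j hj ℓ hℓ
    have h2 : (ℓ.1 : ℕ) < m := ℓ.2
    have h3 := H ⟨⟨j, hj⟩, ⟨ℓ.1, hℓ⟩⟩
    have h4 : dotProduct (rowAt m (C j) ℓ.1) w = 0 := by
      exact h3
    rw [rowAt_dot (C j) ℓ.1 h2 w] at h4
    simpa using h4
  · intro H p
    obtain ⟨⟨j, hj⟩, ⟨r, hr⟩⟩ := p
    have h2 : r < m := lt_of_lt_of_le hr (hc j hj)
    show dotProduct (rowAt m (C j) r) w = _
    rw [rowAt_dot (C j) r h2 w]
    simpa using H j hj ⟨r, h2⟩ hr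

/-- the indicator of prefix agreement -/
def chi {m : ℕ} (y y' : Fin m → ZMod 2) (c : ℕ) : ℚ := if bitsEq y y' c then 1 else 0

lemma prod_chi_eq {m s : ℕ} (C : Fin s → Matrix (Fin m) (Fin m) (ZMod 2))
    (u : Finset (Fin s)) (c : Fin s → ℕ) (hc : ∀ j ∈ u, c j ≤ m) (a b : Fin m → ZMod 2) :
    (∏ j ∈ u, chi ((C j).mulVec a) ((C j).mulVec b) (c j))
      = if (stack C u c).mulVec (a + b) = 0 then (1 : ℚ) else 0 := by
  classical
  unfold chi
  rw [Finset.prod_boole]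
  have hiff : (∀ j ∈ u, bitsEq ((C j).mulVec a) ((C j).mulVec b) (c j))
      ↔ (stack C u c).mulVec (a + b) = 0 := by
    rw [stack_mulVec_eq_zero_iff C u c hc (a + b)]
    constructor
    · intro h j hj ℓ hℓ
      exact (bitsEq_mulVec_iff (C j) a b (c j)).mp (h j hj) ℓ hℓ
    · intro h j hj
      exact (bitsEq_mulVec_iff (C j) a b (c j)).mpr (h j hj)
  by_cases h : (stack C u c).mulVec (a + b) = 0
  · rw [if_pos h, if_pos (hiff.mpr h)]
  · rw [if_neg h, if_neg (fun hh => h (hiff.mp hh))]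

/-! #### counting -/

lemma bvec_inj {m : ℕ} {i i' : ℕ} (hi : i < 2 ^ m) (hi' : i' < 2 ^ m)
    (h : bvec m i = bvec m i') : i = i' := by
  apply Nat.eq_of_testBit_eq
  intro pos
  by_cases hp : pos < m
  · have h2 := congrFun h ⟨pos, hp⟩
    simp only [bvec] at h2
    cases hbi : Nat.testBit i pos <;> cases hbi' : Nat.testBit i' pos
    · rfl
    · rw [hbi, hbi'] at h2; simp at h2
    · rw [hbi, hbi'] at h2; simp at h2
    · rfl
  · have hb : Nat.testBit i pos = false :=
      Nat.testBit_eq_false_of_lt (lt_of_lt_of_le hi (Nat.pow_le_pow_right (by norm_num) (by omega)))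
    have hb' : Nat.testBit i' pos = false :=
      Nat.testBit_eq_false_of_lt (lt_of_lt_of_le hi' (Nat.pow_le_pow_right (by norm_num) (by omega)))
    rw [hb, hb']

lemma sum_bvec {m : ℕ} (f : (Fin m → ZMod 2) → ℚ) :
    ∑ i ∈ Finset.range (2 ^ m), f (bvec m i) = ∑ w : Fin m → ZMod 2, f w := by
  have hcard : (Finset.univ : Finset (Fin m → ZMod 2)).card ≤ (Finset.range (2 ^ m)).card := by
    simp [ZMod.card]
  have hinj : ∀ a₁ a₂ (ha₁ : a₁ ∈ Finset.range (2 ^ m)) (ha₂ : a₂ ∈ Finset.range (2 ^ m)),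
      bvec m a₁ = bvec m a₂ → a₁ = a₂ := by
    intro a₁ a₂ h1 h2 h
    exact bvec_inj (Finset.mem_range.mp h1) (Finset.mem_range.mp h2) h
  refine Finset.sum_bij (fun a _ => bvec m a) (fun a ha => Finset.mem_univ _)
    (fun a₁ ha₁ a₂ ha₂ h => hinj a₁ a₂ ha₁ ha₂ h) ?_ (fun a ha => rfl)
  intro b hb
  obtain ⟨a, ha, hab⟩ := Finset.surj_on_of_inj_on_of_card_le (fun a _ => bvec m a)
    (fun a ha => Finset.mem_univ _) (fun a₁ a₂ h1 h2 h => hinj a₁ a₂ h1 h2 h) hcard b hb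
  exact ⟨a, ha, hab.symm⟩

/-- counting: double sum of kernel indicator -/
lemma count_ker {m : ℕ} {ι : Type*} [Fintype ι] (A : Matrix ι (Fin m) (ZMod 2)) :
    (∑ i ∈ Finset.range (2 ^ m), ∑ i' ∈ Finset.range (2 ^ m),
        (if A.mulVec (bvec m i + bvec m i') = 0 then (1 : ℚ) else 0))
      = 2 ^ m * (Nat.card (LinearMap.ker A.mulVecLin) : ℚ) := by
  classical
  have hker : ∀ z, (A.mulVec z = 0) ↔ z ∈ LinearMap.ker A.mulVecLin := by
    intro z
    rw [LinearMap.mem_ker, Matrix.mulVecLin_apply]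
  have hz : ∀ w : Fin m → ZMod 2,
      (∑ w' : Fin m → ZMod 2, (if A.mulVec (w + w') = 0 then (1 : ℚ) else 0))
        = (Nat.card (LinearMap.ker A.mulVecLin) : ℚ) := by
    intro w
    classical
    haveI : Fintype (LinearMap.ker A.mulVecLin) := Fintype.ofFinite _
    have he := Fintype.sum_equiv (Equiv.addLeft w)
      (fun w' => if A.mulVec (w + w') = 0 then (1 : ℚ) else 0)
      (fun z => if A.mulVec z = 0 then (1 : ℚ) else 0)
      (fun z => by rw [Equiv.coe_addLeft])
    rw [he, Finset.sum_boole, Nat.card_eq_fintype_card]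
    congr 1
    rw [Fintype.card_of_subtype (Finset.univ.filter (fun z => A.mulVec z = 0))
      (fun z => by rw [Finset.mem_filter]; simp only [Finset.mem_univ, true_and]; exact hker z)]
  calc (∑ i ∈ Finset.range (2 ^ m), ∑ i' ∈ Finset.range (2 ^ m),
        (if A.mulVec (bvec m i + bvec m i') = 0 then (1 : ℚ) else 0))
      = ∑ i ∈ Finset.range (2 ^ m), ∑ w' : Fin m → ZMod 2,
          (if A.mulVec (bvec m i + w') = 0 then (1 : ℚ) else 0) := by
        apply Finset.sum_congr rfl
        intro i _
        exact sum_bvec (fun w' => if A.mulVec (bvec m i + w') = 0 then (1 : ℚ) else 0)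
    _ = ∑ i ∈ Finset.range (2 ^ m), (Nat.card (LinearMap.ker A.mulVecLin) : ℚ) := by
        apply Finset.sum_congr rfl
        intro i _
        exact hz _
    _ = 2 ^ m * (Nat.card (LinearMap.ker A.mulVecLin) : ℚ) := by
        rw [Finset.sum_const, Finset.card_range]
        simp [mul_comm]

lemma card_ker_eq {m : ℕ} {ι : Type*} [Fintype ι] (A : Matrix ι (Fin m) (ZMod 2)) :
    Nat.card (LinearMap.ker A.mulVecLin)
      = 2 ^ (Module.finrank (ZMod 2) (LinearMap.ker A.mulVecLin)) := by
  haveI : Fintype (LinearMap.ker A.mulVecLin) := Fintype.ofFinite _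
  rw [Nat.card_eq_fintype_card, Module.card_eq_pow_finrank (K := ZMod 2), ZMod.card]

lemma finrank_ker_add_rank {m : ℕ} {ι : Type*} [Fintype ι] (A : Matrix ι (Fin m) (ZMod 2)) :
    Module.finrank (ZMod 2) (LinearMap.ker A.mulVecLin) + A.rank = m := by
  have h := LinearMap.finrank_range_add_finrank_ker A.mulVecLin
  rw [Matrix.rank]
  have h2 : Module.finrank (ZMod 2) (Fin m → ZMod 2) = m := by simp
  omega

/-! #### rank lemmas -/

variable {m s : ℕ} {C : Fin s → Matrix (Fin m) (Fin m) (ZMod 2)} {u : Finset (Fin s)}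

lemma card_sigma (c : Fin s → ℕ) :
    Fintype.card ((j : {x // x ∈ u}) × Fin (c j.1)) = ∑ j ∈ u, c j := by
  rw [Fintype.card_sigma]
  simp only [Fintype.card_fin]
  exact Finset.sum_coe_sort u c

/-- row map between stacks for `c' ≤ c` on `u` -/
def emb (c' c : Fin s → ℕ) (h : ∀ j ∈ u, c' j ≤ c j) :
    ((j : {x // x ∈ u}) × Fin (c' j.1)) → ((j : {x // x ∈ u}) × Fin (c j.1)) :=
  fun p => ⟨p.1, ⟨p.2.1, lt_of_lt_of_le p.2.2 (h p.1.1 p.1.2)⟩⟩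

lemma emb_inj (c' c : Fin s → ℕ) (h : ∀ j ∈ u, c' j ≤ c j) :
    Function.Injective (emb (u := u) c' c h) := by
  rintro ⟨j, r⟩ ⟨j', r'⟩ hpq
  simp only [emb, Sigma.mk.inj_iff] at hpq
  obtain ⟨rfl, h2⟩ := hpq
  have h3 : (⟨r.1, _⟩ : Fin (c j.1)) = ⟨r'.1, _⟩ := eq_of_heq h2
  rw [Fin.mk.injEq] at h3
  simp [Fin.ext_iff, h3]

lemma stack_comp_emb (c' c : Fin s → ℕ) (h : ∀ j ∈ u, c' j ≤ c j) :
    stack C u c' = (stack C u c) ∘ (emb c' c h) := rfl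

lemma range_sub (c' c : Fin s → ℕ) (h : ∀ j ∈ u, c' j ≤ c j) :
    Set.range (stack C u c') ⊆ Set.range (stack C u c) := by
  rintro x ⟨p, rfl⟩
  exact ⟨emb c' c h p, rfl⟩

lemma rank_mono (c' c : Fin s → ℕ) (h : ∀ j ∈ u, c' j ≤ c j) :
    (stack C u c').rank ≤ (stack C u c).rank := by
  rw [Matrix.rank_eq_finrank_span_row, Matrix.rank_eq_finrank_span_row]
  exact Submodule.finrank_mono (Submodule.span_mono (range_sub c' c h))

lemma full_iff_indep (c : Fin s → ℕ) :
    (stack C u c).rank = ∑ j ∈ u, c j ↔ LinearIndependent (ZMod 2) (stack C u c) := by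
  rw [Matrix.rank_eq_finrank_span_row, show LinearIndependent (ZMod 2) (stack C u c) ↔
    LinearIndependent (ZMod 2) (stack C u c).row from Iff.rfl,
    linearIndependent_iff_card_eq_finrank_span, card_sigma]
  have hsf : Set.finrank (ZMod 2) (Set.range (stack C u c).row)
      = Module.finrank (ZMod 2) (Submodule.span (ZMod 2) (Set.range (stack C u c).row)) := rfl
  rw [hsf]
  exact ⟨fun h => h.symm, fun h => h.symm⟩

lemma indep_sub (c' c : Fin s → ℕ) (h : ∀ j ∈ u, c' j ≤ c j)
    (hi : LinearIndependent (ZMod 2) (stack C u c)) :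
    LinearIndependent (ZMod 2) (stack C u c') := by
  rw [stack_comp_emb c' c h]
  exact hi.comp _ (emb_inj c' c h)

lemma rank_ge_of_indep_sub (c' c : Fin s → ℕ) (h : ∀ j ∈ u, c' j ≤ c j)
    (hi : LinearIndependent (ZMod 2) (stack C u c')) :
    ∑ j ∈ u, c' j ≤ (stack C u c).rank := by
  have h1 : (stack C u c').rank = ∑ j ∈ u, c' j := (full_iff_indep c').mpr hi
  exact h1 ▸ rank_mono c' c h

/-- greedy: choose `g ≤ f` with given sum over `u` -/
lemma greedy {ι : Type*} [DecidableEq ι] (u : Finset ι) (f : ι → ℕ) (n : ℕ)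
    (hn : n ≤ ∑ j ∈ u, f j) :
    ∃ g : ι → ℕ, (∀ j, g j ≤ f j) ∧ (∑ j ∈ u, g j = n) := by
  induction u using Finset.cons_induction generalizing n with
  | empty => exact ⟨fun _ => 0, fun _ => Nat.zero_le _, by simpa using (hn.antisymm (by simp)).symm⟩
  | cons a u ha ih =>
    rw [Finset.sum_cons] at hn
    set n₁ := min n (f a) with hn₁
    have h2 : n - n₁ ≤ ∑ j ∈ u, f j := by omega
    obtain ⟨g, hg1, hg2⟩ := ih (n - n₁) h2
    refine ⟨Function.update g a n₁, ?_, ?_⟩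
    · intro j
      by_cases hj : j = a
      · subst hj; simp [Function.update_self]; omega
      · simp [Function.update_of_ne hj]; exact hg1 j
    · rw [Finset.sum_cons, Function.update_self]
      have h3 : ∑ j ∈ u, Function.update g a n₁ j = ∑ j ∈ u, g j := by
        apply Finset.sum_congr rfl
        intro j hj
        exact Function.update_of_ne (by rintro rfl; exact ha hj) _ _
      rw [h3, hg2]
      omega

end DigAux

theorem statement (m s : ℕ) (hm : 1 ≤ m) (hs : 1 ≤ s)
    (C : Fin s → Matrix (Fin m) (Fin m) (ZMod 2))
    (u : Finset (Fin s)) (hu : u.Nonempty)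
    (hfull : (stack C u (fun _ => 1)).rank = u.card)
    (k : Fin s → ℕ) (hk : ∀ j ∈ u, k j ≤ m - 1) :
    Gam C u k ≤ (2 : ℚ) ^ (tStar C u + u.card - 1) := by
  classical
  set S : Set ℕ := {K : ℕ | ∃ k : Fin s → ℕ, (∀ j ∈ u, 1 ≤ k j ∧ k j ≤ m) ∧
      K = ∑ j ∈ u, k j ∧ (stack C u k).rank ≠ ∑ j ∈ u, k j} ∪ {m + 1} with hS
  have htS : tStar C u = m + 1 - sInf S := rfl
  have hucard : 1 ≤ u.card := Finset.card_pos.mpr hu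
  have hKle : sInf S ≤ m + 1 := Nat.sInf_le (Set.mem_union_right _ rfl)
  have hσm : u.card ≤ m := by
    have h1 := Matrix.rank_le_card_width (stack C u (fun _ => 1))
    rw [hfull] at h1
    simpa using h1
  have hone : (∑ j ∈ u, (fun _ => (1:ℕ)) j) = u.card := by simp
  have hindep1 : LinearIndependent (ZMod 2) (stack C u (fun _ => 1)) := by
    apply (DigAux.full_iff_indep (C := C) (u := u) (fun _ => 1)).mp
    rw [hfull, hone]
  have hKge : u.card + 1 ≤ sInf S := by
    by_contra hcon
    push_neg at hcon
    have hSne : S.Nonempty := ⟨m + 1, Set.mem_union_right _ rfl⟩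
    have hmem := Nat.sInf_mem hSne
    rcases hmem with hbad | hm1
    · obtain ⟨k', hk'1, hk'2, hk'3⟩ := hbad
      have hge : ∀ j ∈ u, 1 ≤ k' j := fun j hj => (hk'1 j hj).1
      have hsum_ge : u.card ≤ ∑ j ∈ u, k' j := by
        calc u.card = ∑ j ∈ u, 1 := by simp
          _ ≤ ∑ j ∈ u, k' j := Finset.sum_le_sum hge
      have hsum_eq : ∑ j ∈ u, k' j = u.card := by omega
      have hall : ∀ j ∈ u, k' j ≤ 1 := by
        by_contra hc
        push_neg at hc
        obtain ⟨j₀, hj₀, hj₀2⟩ := hc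
        have hlt := Finset.sum_lt_sum hge ⟨j₀, hj₀, hj₀2⟩
        simp only [Finset.sum_const, smul_eq_mul, mul_one] at hlt
        omega
      have hi' : LinearIndependent (ZMod 2) (stack C u k') :=
        DigAux.indep_sub k' (fun _ => 1) hall hindep1
      exact hk'3 ((DigAux.full_iff_indep k').mpr hi')
    · have : sInf S = m + 1 := hm1
      omega
  have he : tStar C u + u.card - 1 = m + u.card - sInf S := by
    rw [htS]; omega
  -- common notation
  have hkm : ∀ j ∈ u, k j + 1 ≤ m := fun j hj => by have := hk j hj; omega
  set yv : ℕ → Fin s → (Fin m → ZMod 2) := fun i j => (C j).mulVec (bvec m i) with hyv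
  have hpt : ∀ i j, pt C i j = DigAux.rval m (yv i j) := fun i j => rfl
  set T : ℚ := ∑ i ∈ Finset.range (2 ^ m), ∑ i' ∈ Finset.range (2 ^ m),
      ∏ j ∈ u, (Nf (pt C i j) (pt C i' j) (k j) : ℚ) with hT
  have hGamT : Gam C u k = (2 ^ m : ℚ)⁻¹ * T := rfl
  rcases lt_or_ge (∑ j ∈ u, k j + u.card) (sInf S) with hcase | hcase
  -- ===================== CASE A =====================
  · -- the gain coefficient vanishes
    set cv : Finset (Fin s) → Fin s → ℕ := fun v j => k j + (if j ∈ v then 1 else 0) with hcv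
    have hcvle : ∀ v, ∀ j ∈ u, cv v j ≤ m := by
      intro v j hj
      have := hkm j hj
      simp only [hcv]
      split <;> omega
    -- full rank of k+1 stack
    have hsum_k1 : ∑ j ∈ u, (k j + 1) = ∑ j ∈ u, k j + u.card := by
      rw [Finset.sum_add_distrib]; simp
    have hfull_k1 : (stack C u (fun j => k j + 1)).rank = ∑ j ∈ u, (k j + 1) := by
      by_contra hne
      have hmem : (∑ j ∈ u, (k j + 1)) ∈ S := by
        left
        refine ⟨fun j => k j + 1, fun j hj =>
          ⟨show 1 ≤ k j + 1 by omega, show k j + 1 ≤ m from hkm j hj⟩, ?_, ?_⟩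
        · show (∑ j ∈ u, (k j + 1)) = ∑ j ∈ u, (k j + 1)
          rfl
        · exact hne
      have := Nat.sInf_le hmem
      omega
    have hindep_k1 : LinearIndependent (ZMod 2) (stack C u (fun j => k j + 1)) :=
      (DigAux.full_iff_indep _).mp hfull_k1
    have hindep_v : ∀ v, LinearIndependent (ZMod 2) (stack C u (cv v)) := by
      intro v
      apply DigAux.indep_sub (cv v) (fun j => k j + 1) _ hindep_k1
      intro j hj
      simp only [hcv]
      split <;> omega
    have hsumcv : ∀ v ∈ u.powerset, ∑ j ∈ u, cv v j = ∑ j ∈ u, k j + v.card := by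
      intro v hv
      rw [Finset.mem_powerset] at hv
      simp only [hcv]
      rw [Finset.sum_add_distrib]
      congr 1
      rw [Finset.sum_ite_mem, Finset.inter_eq_right.mpr hv]
      simp
    -- the inner product expansion
    have hprod : ∀ i i', (∏ j ∈ u, (Nf (pt C i j) (pt C i' j) (k j) : ℚ))
        = ∑ v ∈ u.powerset, ((2:ℚ) ^ v.card * (-1:ℚ) ^ (u \ v).card) *
            (if (stack C u (cv v)).mulVec (bvec m i + bvec m i') = 0 then (1:ℚ) else 0) := by
      intro i i'
      calc (∏ j ∈ u, (Nf (pt C i j) (pt C i' j) (k j) : ℚ))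
          = ∏ j ∈ u, (2 * DigAux.chi (yv i j) (yv i' j) (k j + 1)
              + (- DigAux.chi (yv i j) (yv i' j) (k j))) := by
            apply Finset.prod_congr rfl
            intro j hj
            rw [hpt, hpt, DigAux.Nf_eq _ _ _ (hkm j hj), sub_eq_add_neg]
            rfl
        _ = ∑ v ∈ u.powerset, (∏ j ∈ v, 2 * DigAux.chi (yv i j) (yv i' j) (k j + 1)) *
              ∏ j ∈ u \ v, (- DigAux.chi (yv i j) (yv i' j) (k j)) :=
            Finset.prod_add _ _ u
        _ = ∑ v ∈ u.powerset, ((2:ℚ) ^ v.card * (-1:ℚ) ^ (u \ v).card) *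
              (if (stack C u (cv v)).mulVec (bvec m i + bvec m i') = 0 then (1:ℚ) else 0) := by
            apply Finset.sum_congr rfl
            intro v hv
            have hvsub : v ⊆ u := Finset.mem_powerset.mp hv
            have h1 : (∏ j ∈ v, 2 * DigAux.chi (yv i j) (yv i' j) (k j + 1))
                = 2 ^ v.card * ∏ j ∈ v, DigAux.chi (yv i j) (yv i' j) (k j + 1) := by
              rw [Finset.prod_mul_distrib, Finset.prod_const]
            have h2 : (∏ j ∈ u \ v, (- DigAux.chi (yv i j) (yv i' j) (k j)))
                = (-1:ℚ) ^ (u \ v).card * ∏ j ∈ u \ v, DigAux.chi (yv i j) (yv i' j) (k j) := by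
              rw [show (fun j => - DigAux.chi (yv i j) (yv i' j) (k j))
                  = fun j => (-1:ℚ) * DigAux.chi (yv i j) (yv i' j) (k j) by funext j; ring]
              rw [Finset.prod_mul_distrib, Finset.prod_const]
            have h3 : (∏ j ∈ v, DigAux.chi (yv i j) (yv i' j) (k j + 1)) *
                (∏ j ∈ u \ v, DigAux.chi (yv i j) (yv i' j) (k j))
                = ∏ j ∈ u, DigAux.chi (yv i j) (yv i' j) (cv v j) := by
              rw [← Finset.prod_sdiff hvsub]
              have h4 : ∏ j ∈ v, DigAux.chi (yv i j) (yv i' j) (k j + 1)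
                  = ∏ j ∈ v, DigAux.chi (yv i j) (yv i' j) (cv v j) :=
                Finset.prod_congr rfl (fun j hj => by simp [hcv, hj])
              have h5 : ∏ j ∈ u \ v, DigAux.chi (yv i j) (yv i' j) (k j)
                  = ∏ j ∈ u \ v, DigAux.chi (yv i j) (yv i' j) (cv v j) :=
                Finset.prod_congr rfl (fun j hj => by
                  have : j ∉ v := (Finset.mem_sdiff.mp hj).2
                  simp [hcv, this])
              rw [h4, h5, mul_comm]
            rw [h1, h2, mul_mul_mul_comm, h3,
              DigAux.prod_chi_eq C u (cv v) (hcvle v) (bvec m i) (bvec m i')]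
    -- swap summations and evaluate
    have hTval : T = (∑ v ∈ u.powerset, (-1:ℚ) ^ (u \ v).card) *
        (2 ^ m * 2 ^ (m - ∑ j ∈ u, k j)) := by
      rw [hT]
      calc (∑ i ∈ Finset.range (2 ^ m), ∑ i' ∈ Finset.range (2 ^ m),
            ∏ j ∈ u, (Nf (pt C i j) (pt C i' j) (k j) : ℚ))
          = ∑ i ∈ Finset.range (2 ^ m), ∑ i' ∈ Finset.range (2 ^ m),
              ∑ v ∈ u.powerset, ((2:ℚ) ^ v.card * (-1:ℚ) ^ (u \ v).card) *
                (if (stack C u (cv v)).mulVec (bvec m i + bvec m i') = 0 then (1:ℚ) else 0) := by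
            apply Finset.sum_congr rfl
            intro i _
            apply Finset.sum_congr rfl
            intro i' _
            exact hprod i i'
        _ = ∑ v ∈ u.powerset, ∑ i ∈ Finset.range (2 ^ m), ∑ i' ∈ Finset.range (2 ^ m),
              ((2:ℚ) ^ v.card * (-1:ℚ) ^ (u \ v).card) *
                (if (stack C u (cv v)).mulVec (bvec m i + bvec m i') = 0 then (1:ℚ) else 0) := by
            exact (Finset.sum_congr rfl (fun i _ => Finset.sum_comm)).trans Finset.sum_comm
        _ = ∑ v ∈ u.powerset, (-1:ℚ) ^ (u \ v).card * (2 ^ m * 2 ^ (m - ∑ j ∈ u, k j)) := by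
            apply Finset.sum_congr rfl
            intro v hv
            simp only [← Finset.mul_sum]
            rw [DigAux.count_ker (stack C u (cv v)),
              DigAux.card_ker_eq (stack C u (cv v))]
            have hrank : (stack C u (cv v)).rank = ∑ j ∈ u, k j + v.card := by
              rw [(DigAux.full_iff_indep (cv v)).mpr (hindep_v v), hsumcv v hv]
            have hd := DigAux.finrank_ker_add_rank (stack C u (cv v))
            rw [hrank] at hd
            have hvle : v.card ≤ u.card := Finset.card_le_card (Finset.mem_powerset.mp hv)
            have hpow : (2:ℚ) ^ v.card *
                2 ^ (Module.finrank (ZMod 2) (LinearMap.ker (stack C u (cv v)).mulVecLin))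
                = 2 ^ (m - ∑ j ∈ u, k j) := by
              rw [← pow_add]
              congr 1
              omega
            push_cast
            calc (2:ℚ) ^ v.card * (-1:ℚ) ^ (u \ v).card *
                ((2:ℚ) ^ m * (2:ℚ) ^ Module.finrank (ZMod 2)
                  (LinearMap.ker (stack C u (cv v)).mulVecLin))
                = (-1:ℚ) ^ (u \ v).card * ((2:ℚ) ^ m *
                    ((2:ℚ) ^ v.card * (2:ℚ) ^ Module.finrank (ZMod 2)
                      (LinearMap.ker (stack C u (cv v)).mulVecLin))) := by ring
              _ = (-1:ℚ) ^ (u \ v).card * (2 ^ m * 2 ^ (m - ∑ j ∈ u, k j)) := by rw [hpow]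
        _ = (∑ v ∈ u.powerset, (-1:ℚ) ^ (u \ v).card) * (2 ^ m * 2 ^ (m - ∑ j ∈ u, k j)) := by
            rw [Finset.sum_mul]
    have hzero : (∑ v ∈ u.powerset, (-1:ℚ) ^ (u \ v).card) = 0 := by
      have hpa := Finset.prod_add (fun _ : Fin s => (1:ℚ)) (fun _ : Fin s => (-1:ℚ)) u
      simp only [Finset.prod_const_one, one_mul, Finset.prod_const] at hpa
      rw [← hpa]
      have h10 : (1:ℚ) + (-1:ℚ) = 0 := by norm_num
      rw [h10]
      exact zero_pow (by omega)
    have hGam0 : Gam C u k = 0 := by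
      rw [hGamT, hTval, hzero, zero_mul, mul_zero]
    rw [hGam0]
    positivity
  -- ===================== CASE B =====================
  · set d := Module.finrank (ZMod 2) (LinearMap.ker (stack C u k).mulVecLin) with hd
    have hkmle : ∀ j ∈ u, k j ≤ m := fun j hj => by have := hk j hj; omega
    have hTle : T ≤ 2 ^ m * 2 ^ d := by
      rw [hT]
      calc (∑ i ∈ Finset.range (2 ^ m), ∑ i' ∈ Finset.range (2 ^ m),
            ∏ j ∈ u, (Nf (pt C i j) (pt C i' j) (k j) : ℚ))
          ≤ ∑ i ∈ Finset.range (2 ^ m), ∑ i' ∈ Finset.range (2 ^ m),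
              (if (stack C u k).mulVec (bvec m i + bvec m i') = 0 then (1:ℚ) else 0) := by
            apply Finset.sum_le_sum
            intro i _
            apply Finset.sum_le_sum
            intro i' _
            calc (∏ j ∈ u, (Nf (pt C i j) (pt C i' j) (k j) : ℚ))
                ≤ |∏ j ∈ u, (Nf (pt C i j) (pt C i' j) (k j) : ℚ)| := le_abs_self _
              _ = ∏ j ∈ u, |(Nf (pt C i j) (pt C i' j) (k j) : ℚ)| := Finset.abs_prod _ _
              _ ≤ ∏ j ∈ u, DigAux.chi (yv i j) (yv i' j) (k j) := by
                  apply Finset.prod_le_prod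
                  · intro j _; exact abs_nonneg _
                  · intro j hj
                    rw [hpt, hpt]
                    exact DigAux.Nf_abs _ _ _ (hkm j hj)
              _ = (if (stack C u k).mulVec (bvec m i + bvec m i') = 0 then (1:ℚ) else 0) :=
                  DigAux.prod_chi_eq C u k hkmle (bvec m i) (bvec m i')
        _ = 2 ^ m * 2 ^ d := by
            rw [DigAux.count_ker (stack C u k), DigAux.card_ker_eq (stack C u k), hd]
            push_cast
            ring
    -- lower bound on the rank of stack C u k
    have hn_le : sInf S - u.card ≤ ∑ j ∈ u, k j := by omega
    obtain ⟨g, hg1, hg2⟩ := DigAux.greedy u k (sInf S - u.card) hn_le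
    have hn1 : 1 ≤ sInf S - u.card := by omega
    have hgne : ∃ j₀ ∈ u, g j₀ ≠ 0 := by
      apply Finset.exists_ne_zero_of_sum_ne_zero
      omega
    obtain ⟨j₀, hj₀u, hj₀⟩ := hgne
    set gh : Fin s → ℕ := fun j => max (g j) 1 with hgh
    have hsum_gh : ∑ j ∈ u, gh j < sInf S := by
      have hlt : ∑ j ∈ u, gh j < ∑ j ∈ u, (g j + 1) := by
        apply Finset.sum_lt_sum
        · intro j _
          simp only [hgh]
          omega
        · refine ⟨j₀, hj₀u, ?_⟩
          simp only [hgh]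
          omega
      have heq : ∑ j ∈ u, (g j + 1) = (sInf S - u.card) + u.card := by
        rw [Finset.sum_add_distrib, hg2]; simp
      omega
    have hfull_gh : (stack C u gh).rank = ∑ j ∈ u, gh j := by
      by_contra hne
      have hmem : (∑ j ∈ u, gh j) ∈ S := by
        left
        refine ⟨gh, fun j hj => ⟨le_max_right _ _, ?_⟩, rfl, hne⟩
        have := hk j hj
        have := hg1 j
        simp only [hgh]
        omega
      have := Nat.sInf_le hmem
      omega
    have hindep_g : LinearIndependent (ZMod 2) (stack C u g) := by
      apply DigAux.indep_sub g gh (fun j _ => le_max_left _ _)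
      exact (DigAux.full_iff_indep gh).mp hfull_gh
    have hrank_ge : sInf S - u.card ≤ (stack C u k).rank := by
      rw [← hg2]
      exact DigAux.rank_ge_of_indep_sub g k (fun j _ => hg1 j) hindep_g
    have hdrank := DigAux.finrank_ker_add_rank (stack C u k)
    have hde : d ≤ m + u.card - sInf S := by omega
    calc Gam C u k = (2 ^ m : ℚ)⁻¹ * T := hGamT
      _ ≤ (2 ^ m : ℚ)⁻¹ * (2 ^ m * 2 ^ d) := by
          apply mul_le_mul_of_nonneg_left hTle
          positivity
      _ = 2 ^ d := by
          rw [← mul_assoc, inv_mul_cancel₀ (by positivity), one_mul]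
      _ ≤ (2:ℚ) ^ (m + u.card - sInf S) := by
          apply pow_le_pow_right₀ (by norm_num) hde
      _ = (2:ℚ) ^ (tStar C u + u.card - 1) := by rw [he]

end
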